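/- Let X be a vector space with basis (v_i)_{i ∈ I}, where I is partially ordered with no infinite strictly decreasing chains, and let Y ⊆ X be a subspace. Suppose J ⊆ I is a subset such that for each j ∈ J there is an element of Y equal to v_j plus a linear combination of v_i with i < j. Then the images of the vectors v_i with i ∉ J span the quotient X/Y. -/

import Mathlib

/-- Let `X` be a vector space with basis `(v i)_{i ∈ I}`, where the partial order on `I`
has no infinite strictly decreasing chains, and let `Y ⊆ X` be a subspace. If `J ⊆ I` is
such that for every `j ∈ J` some element of `Y` equals `v j` plus a linear combination of
the `v i` with `i < j`, then the images of the `v i` with `i ∉ J` span the quotient `X/Y`. -/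
theorem stmt_8 {K X I : Type*} [Field K] [AddCommGroup X] [Module K X]
    [PartialOrder I] [WellFoundedLT I]
    (v : Module.Basis I K X) (Y : Submodule K X) (J : Set I)
    (h : ∀ j ∈ J, ∃ y ∈ Submodule.span K (v '' {i | i < j}), v j + y ∈ Y) :
    Submodule.span K ((fun i => Y.mkQ (v i)) '' {i | i ∉ J}) = ⊤ := by
  set S := Submodule.span K ((fun i => Y.mkQ (v i)) '' {i | i ∉ J}) with hS
  have key : ∀ i, Y.mkQ (v i) ∈ S := by
    intro i
    induction i using WellFoundedLT.induction with
    | _ i ih =>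
      by_cases hi : i ∈ J
      · obtain ⟨y, hy, hYy⟩ := h i hi
        have heq : Y.mkQ (v i) = - Y.mkQ y := by
          rw [eq_neg_iff_add_eq_zero, ← map_add, Submodule.mkQ_apply,
            Submodule.Quotient.mk_eq_zero]
          exact hYy
        rw [heq]
        refine neg_mem ?_
        have hmem : Y.mkQ y ∈ Submodule.span K (Y.mkQ '' (v '' {i' | i' < i})) := by
          rw [← Submodule.map_span]
          exact Submodule.mem_map_of_mem hy
        refine Submodule.span_le.mpr ?_ hmem
        rintro _ ⟨_, ⟨i', hi', rfl⟩, rfl⟩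
        exact ih i' hi'
      · exact Submodule.subset_span ⟨i, hi, rfl⟩
  have h1 : Submodule.map Y.mkQ (Submodule.span K (Set.range v)) = ⊤ := by
    rw [v.span_eq, Submodule.map_top, Submodule.range_mkQ]
  rw [Submodule.map_span] at h1
  rw [eq_top_iff, ← h1]
  refine Submodule.span_le.mpr ?_
  rintro _ ⟨_, ⟨i, rfl⟩, rfl⟩
  exact key i
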